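/- arXiv:2402.16783 — 2 statements merged into one kernel-verified Lean document; each statement's English description precedes it below -/
import Mathlib

section
/- Let r > 0, let P be the uniform distribution on the circle L = {(x₁,x₂) ∈ ℝ² : x₁² + x₂² = r²}, and consider conditional constrained quantization with constraint S = L and conditional set β = {(r,0)}. For every n ∈ ℕ with n ≥ 1, the set {(r cos(2π(j−1)/n), r sin(2π(j−1)/n)) : 1 ≤ j ≤ n} forms a conditional constrained optimal set of n-points, and the n-th conditional constrained quantization error equals 2r²(1 − (n/π)·sin(π/n)). -/
open MeasureTheory Set Filter

/-- The uniform distribution on the circle of radius `r` centered at the origin: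
the pushforward of the normalized Lebesgue measure on `[0, 2π)` under
`θ ↦ (r cos θ, r sin θ)`. -/
noncomputable def uniformCircle (r : ℝ) : Measure (ℝ × ℝ) :=
  Measure.map (fun θ : ℝ => (r * Real.cos θ, r * Real.sin θ))
    ((ENNReal.ofReal (2 * Real.pi))⁻¹ • volume.restrict (Set.Ico 0 (2 * Real.pi)))

/-- The squared Euclidean distance on `ℝ²`. -/
noncomputable def sqDist (p q : ℝ × ℝ) : ℝ := (p.1 - q.1) ^ 2 + (p.2 - q.2) ^ 2

/-- The distortion error of a set `s` of points for the measure `P` on `ℝ²`. -/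
noncomputable def distortion2 (P : Measure (ℝ × ℝ)) (s : Set (ℝ × ℝ)) : ℝ :=
  ∫ x, sInf (sqDist x '' s) ∂P

/-- The `n`-th conditional constrained quantization error for `P` with respect to the
constraint `S` and the conditional set `β`. -/
noncomputable def condConstrQuantError2 (P : Measure (ℝ × ℝ)) (S β : Set (ℝ × ℝ)) (n : ℕ) :
    ℝ :=
  sInf { v : ℝ | ∃ α : Set (ℝ × ℝ),
    α ⊆ S ∧ α.Finite ∧ α.ncard ≤ n - β.ncard ∧ v = distortion2 P (α ∪ β) }

namespace Stmt8Aux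

open Real

lemma continuous_finset_inf' {X ι : Type*} [TopologicalSpace X] (t : Finset ι) (ht : t.Nonempty)
    (f : ι → X → ℝ) (hf : ∀ i, Continuous (f i)) :
    Continuous fun x => t.inf' ht fun i => f i x := by
  induction ht using Finset.Nonempty.cons_induction with
  | singleton i => simpa using hf i
  | cons i t hi hne ih =>
    have : (fun x => (Finset.cons i t hi).inf' (Finset.cons_nonempty hi) fun j => f j x)
        = fun x => min (f i x) (t.inf' hne fun j => f j x) := by
      funext x; rw [Finset.inf'_cons]
    rw [this]; exact (hf i).min ih

lemma continuous_finset_sup' {X ι : Type*} [TopologicalSpace X] (t : Finset ι) (ht : t.Nonempty)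
    (f : ι → X → ℝ) (hf : ∀ i, Continuous (f i)) :
    Continuous fun x => t.sup' ht fun i => f i x := by
  induction ht using Finset.Nonempty.cons_induction with
  | singleton i => simpa using hf i
  | cons i t hi hne ih =>
    have : (fun x => (Finset.cons i t hi).sup' (Finset.cons_nonempty hi) fun j => f j x)
        = fun x => max (f i x) (t.sup' hne fun j => f j x) := by
      funext x; rw [Finset.sup'_cons]
    rw [this]; exact (hf i).max ih

lemma inf'_affine {ι : Type*} (t : Finset ι) (ht : t.Nonempty) (f : ι → ℝ) {a : ℝ} (ha : 0 ≤ a) :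
    (t.inf' ht fun i => a * (1 - f i)) = a * (1 - t.sup' ht f) := by
  obtain ⟨i0, hi0, h0⟩ := Finset.exists_mem_eq_sup' ht f
  apply le_antisymm
  · exact le_trans (Finset.inf'_le _ hi0) (by rw [h0])
  · apply Finset.le_inf'
    intro i hi
    have : f i ≤ t.sup' ht f := Finset.le_sup' f hi
    nlinarith

lemma sqDist_circle (r θ φ : ℝ) :
    sqDist (r * cos θ, r * sin θ) (r * cos φ, r * sin φ)
      = 2 * r ^ 2 * (1 - cos (θ - φ)) := by
  simp only [sqDist, cos_sub]
  nlinarith [sin_sq_add_cos_sq θ, sin_sq_add_cos_sq φ]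

lemma exists_angle {r : ℝ} (hr : 0 < r) {p : ℝ × ℝ} (hp : p.1 ^ 2 + p.2 ^ 2 = r ^ 2) :
    ∃ φ, p = (r * cos φ, r * sin φ) := by
  set z : ℂ := ⟨p.1, p.2⟩ with hz
  have habs : ‖z‖ = r := by
    rw [Complex.norm_def, Complex.normSq_mk]
    rw [show p.1 * p.1 + p.2 * p.2 = r ^ 2 by nlinarith]
    exact Real.sqrt_sq hr.le
  have hz0 : z ≠ 0 := by
    intro h
    rw [h] at habs
    simp at habs
    exact hr.ne' habs.symm
  refine ⟨Complex.arg z, ?_⟩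
  have h1 : r * cos (Complex.arg z) = p.1 := by
    rw [Complex.cos_arg hz0, habs]; field_simp [hz]; rfl
  have h2 : r * sin (Complex.arg z) = p.2 := by
    rw [Complex.sin_arg, habs]; field_simp [hz]; rfl
  exact Prod.ext h1.symm h2.symm

lemma cos_le_cos_of_band {x c : ℝ} (hc : 0 ≤ c) (h1 : c ≤ |x|) (h2 : |x| ≤ 2 * π - c) :
    cos x ≤ cos c := by
  rw [← Real.cos_abs x]
  rcases le_or_gt (|x|) π with h | h
  · exact Real.cos_le_cos_of_nonneg_of_le_pi hc h h1
  · rw [← Real.cos_two_pi_sub]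
    exact Real.cos_le_cos_of_nonneg_of_le_pi hc (by linarith) (by linarith)

lemma mul_cos_le_sin {x : ℝ} (h0 : 0 < x) (hπ : x ≤ π) : x * cos x ≤ sin x := by
  rcases lt_or_ge x (π / 2) with h | h
  · have ht := Real.lt_tan h0 h
    have hc : 0 < cos x := Real.cos_pos_of_mem_Ioo ⟨by linarith, h⟩
    rw [Real.tan_eq_sin_div_cos, lt_div_iff₀ hc] at ht
    linarith
  · have hc : cos x ≤ 0 := Real.cos_nonpos_of_pi_div_two_le_of_le h (by linarith [Real.pi_pos])
    have hs : 0 ≤ sin x := Real.sin_nonneg_of_nonneg_of_le_pi h0.le hπ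
    nlinarith

lemma max_cos_periodic (c : ℝ) : Function.Periodic (fun θ => max (cos θ) c) (2*π) := by
  intro θ; simp [Real.cos_add_two_pi]

lemma intervalIntegrable_max_cos (c a b : ℝ) :
    IntervalIntegrable (fun θ => max (cos θ) c) volume a b :=
  (Real.continuous_cos.max continuous_const).intervalIntegrable a b

lemma integral_max_cos {x : ℝ} (h0 : 0 < x) (hπ : x ≤ π) :
    ∫ θ in (0:ℝ)..(2*π), max (cos θ) (cos x) = 2 * sin x + cos x * (2*π - 2*x) := by
  have hper := max_cos_periodic (cos x)
  have h1 : ∫ θ in (0:ℝ)..(2*π), max (cos θ) (cos x)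
      = ∫ θ in (-π)..π, max (cos θ) (cos x) := by
    have := hper.intervalIntegral_add_eq 0 (-π)
    rw [show (0:ℝ)+2*π = 2*π by ring, show -π+2*π = π by ring] at this
    exact this
  have hsplit : ∫ θ in (-π)..π, max (cos θ) (cos x)
      = (∫ θ in (-π)..(-x), max (cos θ) (cos x)) + (∫ θ in (-x)..x, max (cos θ) (cos x))
        + ∫ θ in x..π, max (cos θ) (cos x) := by
    rw [intervalIntegral.integral_add_adjacent_intervals (intervalIntegrable_max_cos _ _ _)
      (intervalIntegrable_max_cos _ _ _),
      intervalIntegral.integral_add_adjacent_intervals (intervalIntegrable_max_cos _ _ _)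
      (intervalIntegrable_max_cos _ _ _)]
  have hp1 : ∫ θ in (-π)..(-x), max (cos θ) (cos x) = (π - x) * cos x := by
    rw [intervalIntegral.integral_congr (g := fun _ => cos x) ?_,
      intervalIntegral.integral_const]
    · rw [smul_eq_mul]; ring
    · intro θ hθ
      rw [uIcc_of_le (by linarith)] at hθ
      have h1 : x ≤ |θ| := by rw [abs_of_nonpos (by linarith [hθ.2])]; linarith [hθ.2]
      have h2 : |θ| ≤ 2*π - x := by
        rw [abs_of_nonpos (by linarith [hθ.2])]; linarith [hθ.1]
      exact max_eq_right (cos_le_cos_of_band h0.le h1 h2)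
  have hp3 : ∫ θ in x..π, max (cos θ) (cos x) = (π - x) * cos x := by
    rw [intervalIntegral.integral_congr (g := fun _ => cos x) ?_,
      intervalIntegral.integral_const]
    · first | (rw [smul_eq_mul]; try ring) | skip
    · intro θ hθ
      rw [uIcc_of_le (by linarith)] at hθ
      have h1 : x ≤ |θ| := by rw [abs_of_nonneg (by linarith [hθ.1])]; exact hθ.1
      have h2 : |θ| ≤ 2*π - x := by
        rw [abs_of_nonneg (by linarith [hθ.1])]; linarith [hθ.2]
      exact max_eq_right (cos_le_cos_of_band h0.le h1 h2)
  have hp2 : ∫ θ in (-x)..x, max (cos θ) (cos x) = 2 * sin x := by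
    rw [intervalIntegral.integral_congr (g := fun θ => cos θ) ?_, integral_cos]
    · simp; ring
    · intro θ hθ
      rw [uIcc_of_le (by linarith)] at hθ
      have : cos x ≤ cos θ := by
        rw [← Real.cos_abs θ]
        exact Real.cos_le_cos_of_nonneg_of_le_pi (abs_nonneg θ) hπ (abs_le.2 ⟨hθ.1, hθ.2⟩)
      exact max_eq_left this
  rw [h1, hsplit, hp1, hp2, hp3]; ring

lemma integral_max_cos_shift (φ c : ℝ) :
    ∫ θ in (0:ℝ)..(2*π), max (cos (θ - φ)) c = ∫ θ in (0:ℝ)..(2*π), max (cos θ) c := by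
  have h := intervalIntegral.integral_comp_sub_right (a := 0) (b := 2*π)
    (fun θ => max (cos θ) c) φ
  rw [h]
  have h2 := (max_cos_periodic c).intervalIntegral_add_eq (-φ) 0
  rw [show -φ+2*π = 2*π-φ by ring, zero_add] at h2
  rw [show (0:ℝ)-φ = -φ by ring]
  exact h2

lemma distortion2_eq (r : ℝ) (s : Set (ℝ×ℝ)) (t : Finset (ℝ×ℝ))
    (hts : ↑t = s) (ht : t.Nonempty) :
    distortion2 (uniformCircle r) s
      = (2*π)⁻¹ * ∫ θ in (0:ℝ)..(2*π),
          t.inf' ht (fun p => sqDist (r * cos θ, r * sin θ) p) := by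
  have hcont : Continuous fun x : ℝ×ℝ => t.inf' ht fun p => sqDist x p := by
    apply continuous_finset_inf'
    intro p
    unfold sqDist
    fun_prop
  have hfun : (fun x : ℝ×ℝ => sInf (sqDist x '' s))
      = fun x => t.inf' ht fun p => sqDist x p := by
    funext x
    rw [← hts, ← Finset.inf'_eq_csInf_image t ht]
  have hg : Measurable fun θ : ℝ => (r * cos θ, r * sin θ) := by fun_prop
  rw [distortion2, hfun, uniformCircle,
    integral_map hg.aemeasurable hcont.aestronglyMeasurable,
    integral_smul_measure]
  have htr : ((ENNReal.ofReal (2*π))⁻¹).toReal = (2*π)⁻¹ := by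
    rw [ENNReal.toReal_inv, ENNReal.toReal_ofReal (by positivity)]
  rw [htr, smul_eq_mul]
  congr 1
  rw [MeasureTheory.integral_Ico_eq_integral_Ioo,
    intervalIntegral.integral_of_le (by positivity), MeasureTheory.integral_Ioc_eq_integral_Ioo]

lemma distortion2_ge (r : ℝ) (hr : 0 < r) (n : ℕ) (hn : 1 ≤ n)
    (s : Set (ℝ×ℝ)) (hs : ∀ p ∈ s, p.1^2 + p.2^2 = r^2)
    (t : Finset (ℝ×ℝ)) (hts : ↑t = s) (ht : t.Nonempty) (hcard : t.card ≤ n) :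
    2*r^2*(1 - (n:ℝ)/π * sin (π/n)) ≤ distortion2 (uniformCircle r) s := by
  rw [distortion2_eq r s t hts ht]
  have hπ := Real.pi_pos
  have hN : (0:ℝ) < n := by exact_mod_cast hn
  set x : ℝ := π / n with hx
  have hx0 : 0 < x := by positivity
  have hN1 : (1:ℝ) ≤ n := by exact_mod_cast hn
  have hxπ : x ≤ π := by
    rw [hx, div_le_iff₀ hN]
    nlinarith
  have hnx : (n:ℝ) * x = π := by rw [hx]; field_simp
  set c : ℝ := cos x with hc
  have hang : ∀ p ∈ t, ∃ φ, p = (r * cos φ, r * sin φ) := by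
    intro p hp
    exact exists_angle hr (hs p (by rw [← hts]; exact_mod_cast hp))
  choose! φ hφ using hang
  set A : ℝ := 2*r^2*(1-c) with hA
  set F : ℝ → ℝ := fun θ => A - 2*r^2 * ∑ p ∈ t, (max (cos (θ - φ p)) c - c) with hF
  have hpt : ∀ θ : ℝ, F θ ≤ t.inf' ht fun p => sqDist (r*cos θ, r*sin θ) p := by
    intro θ
    apply Finset.le_inf'
    intro p hp
    have hsq := sqDist_circle r θ (φ p)
    rw [← hφ p hp] at hsq
    rw [hsq]
    have h1 : cos (θ - φ p) - c ≤ ∑ q ∈ t, (max (cos (θ - φ q)) c - c) := by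
      refine le_trans ?_ (Finset.single_le_sum
        (f := fun q => max (cos (θ - φ q)) c - c)
        (fun q _ => sub_nonneg.2 (le_max_right _ _)) hp)
      exact sub_le_sub_right (le_max_left _ _) c
    have hr2 : (0:ℝ) ≤ r^2 := sq_nonneg r
    simp only [hF, hA]
    nlinarith
  have hGcont : Continuous fun θ : ℝ => ∑ p ∈ t, (max (cos (θ - φ p)) c - c) := by
    apply continuous_finset_sum
    intro p _
    exact ((Real.continuous_cos.comp (continuous_id.sub continuous_const)).max
      continuous_const).sub continuous_const
  have hFcont : Continuous F := continuous_const.sub (continuous_const.mul hGcont)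
  have hIcont : Continuous fun θ : ℝ => t.inf' ht fun p => sqDist (r*cos θ, r*sin θ) p := by
    have h1 : Continuous fun z : ℝ×ℝ => t.inf' ht fun p => sqDist z p := by
      apply continuous_finset_inf'
      intro p
      unfold sqDist
      fun_prop
    exact h1.comp (by fun_prop)
  set K : ℝ := 2 * sin x - 2 * x * c with hK
  have hterm : ∀ p : ℝ×ℝ, ∫ θ in (0:ℝ)..(2*π), (max (cos (θ - φ p)) c - c) = K := by
    intro p
    rw [intervalIntegral.integral_sub ?_ (intervalIntegrable_const (c := c))]
    · rw [integral_max_cos_shift (φ p) c, hc, integral_max_cos hx0 hxπ,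
        intervalIntegral.integral_const, smul_eq_mul, hK]
      ring
    · exact ((Real.continuous_cos.comp (continuous_id.sub continuous_const)).max
        continuous_const).intervalIntegrable _ _
  have hIG : ∫ θ in (0:ℝ)..(2*π), (∑ p ∈ t, (max (cos (θ - φ p)) c - c)) = t.card * K := by
    rw [intervalIntegral.integral_finset_sum]
    · rw [Finset.sum_congr rfl (fun p _ => hterm p), Finset.sum_const, nsmul_eq_mul]
    · intro p _
      exact (((Real.continuous_cos.comp (continuous_id.sub continuous_const)).max
        continuous_const).sub continuous_const).intervalIntegrable _ _
  have hIF : ∫ θ in (0:ℝ)..(2*π), F θ = 2*π*A - 2*r^2 * (t.card * K) := by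
    rw [hF]; beta_reduce
    rw [intervalIntegral.integral_sub (f := fun _ => A)
      (g := fun θ => 2*r^2 * ∑ p ∈ t, (max (cos (θ - φ p)) c - c))
      (intervalIntegrable_const (c := A))
      ((continuous_const.mul hGcont).intervalIntegrable _ _),
      intervalIntegral.integral_const, intervalIntegral.integral_const_mul, hIG, smul_eq_mul]
    ring
  have hmono : ∫ θ in (0:ℝ)..(2*π), F θ
      ≤ ∫ θ in (0:ℝ)..(2*π), t.inf' ht fun p => sqDist (r*cos θ, r*sin θ) p := by
    apply intervalIntegral.integral_mono_on (by positivity)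
      (hFcont.intervalIntegrable _ _) (hIcont.intervalIntegrable _ _)
    exact fun θ _ => hpt θ
  have hK0 : 0 ≤ K := by
    have := mul_cos_le_sin hx0 hxπ
    rw [hK]; nlinarith
  have hcardK : (t.card : ℝ) * K ≤ n * K :=
    mul_le_mul_of_nonneg_right (by exact_mod_cast hcard) hK0
  have hval : (2*π)⁻¹ * (2*π*A - 2*r^2 * ((n:ℝ) * K)) = 2*r^2*(1 - (n:ℝ)/π * sin (π/n)) := by
    simp only [hA, hK, hc, hx]
    field_simp
    ring
  calc 2*r^2*(1 - (n:ℝ)/π * sin (π/n))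
      = (2*π)⁻¹ * (2*π*A - 2*r^2 * ((n:ℝ) * K)) := hval.symm
    _ ≤ (2*π)⁻¹ * (2*π*A - 2*r^2 * (t.card * K)) := by
        apply mul_le_mul_of_nonneg_left _ (by positivity)
        nlinarith [sq_nonneg r]
    _ = (2*π)⁻¹ * ∫ θ in (0:ℝ)..(2*π), F θ := by rw [hIF]
    _ ≤ _ := mul_le_mul_of_nonneg_left hmono (by positivity)

section spaced
variable {n : ℕ}

lemma hne (hn : 1 ≤ n) : (Finset.range n).Nonempty :=
  Finset.nonempty_range_iff.2 (by omega)

noncomputable def Mfun (n : ℕ) (hn : 1 ≤ n) : ℝ → ℝ :=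
  fun θ => (Finset.range n).sup' (hne hn) fun j => cos (θ - 2*π*(j:ℝ)/n)

lemma Mfun_periodic (hn : 1 ≤ n) : Function.Periodic (Mfun n hn) (2*π/n) := by
  intro θ
  have hN : ((n:ℝ)) ≠ 0 := by positivity
  simp only [Mfun]
  apply le_antisymm
  · apply Finset.sup'_le
    intro j hj
    rcases Nat.eq_zero_or_pos j with rfl | hj1
    · have he : θ + 2*π/n - 2*π*((0:ℕ):ℝ)/n = (θ - 2*π*(((n-1:ℕ)):ℝ)/n) + 2*π := by
        push_cast [Nat.cast_sub hn]
        field_simp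
        ring
      rw [he, Real.cos_add_two_pi]
      exact Finset.le_sup' (fun j : ℕ => cos (θ - 2*π*(j:ℝ)/n)) (Finset.mem_range.2 (by omega))
    · obtain ⟨j', rfl⟩ : ∃ j'', j = j'' + 1 := ⟨j - 1, by omega⟩
      have he : θ + 2*π/n - 2*π*(((j'+1:ℕ)):ℝ)/n = θ - 2*π*(j':ℝ)/n := by
        push_cast
        field_simp
        ring
      rw [he]
      exact Finset.le_sup' (fun j : ℕ => cos (θ - 2*π*(j:ℝ)/n))
        (Finset.mem_range.2 (Nat.lt_of_succ_lt (Finset.mem_range.1 hj)))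
  · apply Finset.sup'_le
    intro j hj
    by_cases hjn : j + 1 < n
    · have he : θ - 2*π*(j:ℝ)/n = θ + 2*π/n - 2*π*(((j+1:ℕ)):ℝ)/n := by
        push_cast
        field_simp
        ring
      rw [he]
      exact Finset.le_sup' (fun j : ℕ => cos (θ + 2*π/n - 2*π*(j:ℝ)/n)) (Finset.mem_range.2 hjn)
    · have hj' : j = n - 1 := by have := Finset.mem_range.1 hj; omega
      subst hj'
      have he : θ - 2*π*(((n-1:ℕ)):ℝ)/n = (θ + 2*π/n - 2*π*((0:ℕ):ℝ)/n) - 2*π := by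
        push_cast [Nat.cast_sub hn]
        field_simp
        ring
      rw [he, Real.cos_sub_two_pi]
      exact Finset.le_sup' (fun j : ℕ => cos (θ + 2*π/n - 2*π*(j:ℝ)/n))
        (Finset.mem_range.2 (by omega))

lemma Mfun_eq_cos (hn : 1 ≤ n) {θ : ℝ} (hθ : θ ∈ Set.Icc (-(π/n)) (π/n)) :
    Mfun n hn θ = cos θ := by
  have hπ := Real.pi_pos
  have hN : (0:ℝ) < n := by exact_mod_cast hn
  have hN1 : (1:ℝ) ≤ n := by exact_mod_cast hn
  have hu0 : 0 < π/n := by positivity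
  have hnx : (n:ℝ) * (π/n) = π := by field_simp
  apply le_antisymm
  · simp only [Mfun]
    apply Finset.sup'_le
    intro j hj
    rcases Nat.eq_zero_or_pos j with rfl | hj1
    · simp
    · have hj2 : (j:ℝ) + 1 ≤ n := by exact_mod_cast Finset.mem_range.1 hj
      have hj1' : (1:ℝ) ≤ j := by exact_mod_cast hj1
      have hA : (0:ℝ) ≤ π*(j:ℝ)/n - π/n := by
        rw [show π*(j:ℝ)/n - π/n = ((j:ℝ) - 1) * (π/n) by ring]
        exact mul_nonneg (by linarith) hu0.le
      have hB : (0:ℝ) ≤ π - π*(j:ℝ)/n - π/n := by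
        rw [show π - π*(j:ℝ)/n - π/n
            = ((n:ℝ) - 1 - j) * (π/n) + (π - (n:ℝ) * (π/n)) by ring, hnx]
        simpa using mul_nonneg (by linarith : (0:ℝ) ≤ (n:ℝ) - 1 - j) hu0.le
      have hC : 2*π*(j:ℝ)/n = 2*(π*(j:ℝ)/n) := by ring
      have hy : θ - 2*π*(j:ℝ)/n ≤ 0 := by linarith [hθ.2]
      have habs : |θ - 2*π*(j:ℝ)/n| = 2*π*(j:ℝ)/n - θ := by
        rw [abs_of_nonpos hy]; ring
      have h1 : π/n ≤ |θ - 2*π*(j:ℝ)/n| := by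
        rw [habs]; linarith [hθ.2]
      have h2 : |θ - 2*π*(j:ℝ)/n| ≤ 2*π - π/n := by
        rw [habs]; linarith [hθ.1]
      calc cos (θ - 2*π*(j:ℝ)/n) ≤ cos (π/n) := cos_le_cos_of_band hu0.le h1 h2
        _ ≤ cos θ := by
            rw [← Real.cos_abs θ]
            apply Real.cos_le_cos_of_nonneg_of_le_pi (abs_nonneg θ) (by nlinarith [hnx])
            exact abs_le.2 ⟨hθ.1, hθ.2⟩
  · have h0 : cos θ = cos (θ - 2*π*((0:ℕ):ℝ)/n) := by norm_num
    rw [show Mfun n hn θ = (Finset.range n).sup' (hne hn) fun j => cos (θ - 2*π*(j:ℝ)/n) from rfl,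
      h0]
    exact Finset.le_sup' (fun j : ℕ => cos (θ - 2*π*(j:ℝ)/n)) (Finset.mem_range.2 (by omega))

lemma Mfun_continuous (hn : 1 ≤ n) : Continuous (Mfun n hn) := by
  apply continuous_finset_sup'
  intro j
  exact Real.continuous_cos.comp (continuous_id.sub continuous_const)

lemma Mfun_integral (hn : 1 ≤ n) :
    ∫ θ in (0:ℝ)..(2*π), Mfun n hn θ = (n:ℝ) * (2 * sin (π/n)) := by
  have hπ := Real.pi_pos
  have hN : (0:ℝ) < n := by exact_mod_cast hn
  have hint : ∀ a b : ℝ, IntervalIntegrable (Mfun n hn) volume a b :=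
    fun a b => (Mfun_continuous hn).intervalIntegrable a b
  have hz := (Mfun_periodic hn).intervalIntegral_add_zsmul_eq (n:ℤ) 0 hint
  rw [show (0:ℝ) + (n:ℤ) • (2*π/n) = 2*π by rw [zero_add, zsmul_eq_mul]; push_cast; field_simp, zero_add] at hz
  have hshift := (Mfun_periodic hn).intervalIntegral_add_eq 0 (-(π/n))
  rw [zero_add, show -(π/n) + 2*π/n = π/n by ring] at hshift
  rw [hz, hshift]
  have hcg : ∫ θ in (-(π/n))..(π/n), Mfun n hn θ = ∫ θ in (-(π/n))..(π/n), cos θ := by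
    apply intervalIntegral.integral_congr
    intro θ hθ
    rw [Set.uIcc_of_le (by linarith [div_pos hπ hN])] at hθ
    exact Mfun_eq_cos hn hθ
  rw [hcg, integral_cos, Real.sin_neg, zsmul_eq_mul]
  push_cast
  ring

lemma distortion2_spaced (r : ℝ) (hr : 0 < r) (hn : 1 ≤ n) :
    distortion2 (uniformCircle r)
        ((fun j : ℕ => (r * Real.cos (2 * Real.pi * ((j : ℝ) - 1) / n),
                        r * Real.sin (2 * Real.pi * ((j : ℝ) - 1) / n))) '' Set.Icc 1 n)
      = 2 * r ^ 2 * (1 - (n : ℝ) / π * sin (π / n)) := by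
  classical
  have hπ := Real.pi_pos
  have hN : (0:ℝ) < n := by exact_mod_cast hn
  have htne : ((Finset.range n).image
      (fun j : ℕ => (r * cos (2*π*(j:ℝ)/n), r * sin (2*π*(j:ℝ)/n)))).Nonempty :=
    ⟨_, Finset.mem_image.2 ⟨0, Finset.mem_range.2 (by omega), rfl⟩⟩
  have hts : (↑((Finset.range n).image
        (fun j : ℕ => (r * cos (2*π*(j:ℝ)/n), r * sin (2*π*(j:ℝ)/n)))) : Set (ℝ×ℝ))
      = (fun j : ℕ => (r * Real.cos (2 * Real.pi * ((j : ℝ) - 1) / n),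
                        r * Real.sin (2 * Real.pi * ((j : ℝ) - 1) / n))) '' Set.Icc 1 n := by
    rw [Finset.coe_image, Finset.coe_range]
    ext p
    simp only [Set.mem_image, Set.mem_Iio, Set.mem_Icc]
    constructor
    · rintro ⟨j, hj, rfl⟩
      refine ⟨j+1, ⟨by omega, by omega⟩, ?_⟩
      have he : 2*π*(((j+1:ℕ):ℝ) - 1)/n = 2*π*(j:ℝ)/n := by push_cast; ring
      rw [he]
    · rintro ⟨j, ⟨hj1, hjn⟩, rfl⟩
      refine ⟨j-1, by omega, ?_⟩
      have he : 2*π*(((j-1:ℕ)):ℝ)/n = 2*π*((j:ℝ) - 1)/n := by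
        rw [Nat.cast_sub hj1]; push_cast; ring
      rw [he]
  rw [distortion2_eq r _ _ hts htne]
  have hinfeq : ∀ θ : ℝ,
      (((Finset.range n).image
        (fun j : ℕ => (r * cos (2*π*(j:ℝ)/n), r * sin (2*π*(j:ℝ)/n)))).inf' htne
          fun p => sqDist (r*cos θ, r*sin θ) p) = 2*r^2*(1 - Mfun n hn θ) := by
    intro θ
    rw [Finset.inf'_image]
    have hcg : ((Finset.range n).inf' htne.of_image
        ((fun p => sqDist (r*cos θ, r*sin θ) p) ∘
          (fun j : ℕ => (r * cos (2*π*(j:ℝ)/n), r * sin (2*π*(j:ℝ)/n)))))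
        = (Finset.range n).inf' htne.of_image
            (fun j : ℕ => 2*r^2*(1 - cos (θ - 2*π*(j:ℝ)/n))) := by
      apply Finset.inf'_congr _ rfl
      intro j _
      exact sqDist_circle r θ (2*π*(j:ℝ)/n)
    rw [hcg, inf'_affine _ _ _ (by positivity : (0:ℝ) ≤ 2*r^2)]
    rfl
  simp only [hinfeq]
  rw [intervalIntegral.integral_const_mul,
    intervalIntegral.integral_sub (intervalIntegrable_const (c := (1:ℝ)))
      ((Mfun_continuous hn).intervalIntegrable _ _),
    intervalIntegral.integral_const, Mfun_integral hn, smul_eq_mul]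
  field_simp
  ring

end spaced

end Stmt8Aux


/-- Theorem 3.4: for the uniform distribution on the circle of radius `r`, with constraint the
circle itself and conditional set `{(r, 0)}`, the `n`-th conditional constrained quantization
error equals `2r²(1 - (n/π) sin(π/n))`, attained by the `n`-th roots of unity scaled by `r`. -/
theorem stmt8 (r : ℝ) (hr : 0 < r) (n : ℕ) (hn : 1 ≤ n) :
    condConstrQuantError2 (uniformCircle r)
        {p : ℝ × ℝ | p.1 ^ 2 + p.2 ^ 2 = r ^ 2} {(r, 0)} n
      = 2 * r ^ 2 * (1 - (n : ℝ) / Real.pi * Real.sin (Real.pi / n))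
    ∧ distortion2 (uniformCircle r)
        ((fun j : ℕ => (r * Real.cos (2 * Real.pi * ((j : ℝ) - 1) / n),
                        r * Real.sin (2 * Real.pi * ((j : ℝ) - 1) / n))) '' Set.Icc 1 n)
      = 2 * r ^ 2 * (1 - (n : ℝ) / Real.pi * Real.sin (Real.pi / n)) := by
  classical
  have hval2 := Stmt8Aux.distortion2_spaced r hr hn
  refine ⟨?_, hval2⟩
  set V : ℝ := 2 * r ^ 2 * (1 - (n : ℝ) / Real.pi * Real.sin (Real.pi / n)) with hV
  set sn : Set (ℝ×ℝ) := (fun j : ℕ => (r * Real.cos (2 * Real.pi * ((j : ℝ) - 1) / n),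
      r * Real.sin (2 * Real.pi * ((j : ℝ) - 1) / n))) '' Set.Icc 1 n with hsn
  set E : Set ℝ := { v : ℝ | ∃ α : Set (ℝ × ℝ),
    α ⊆ {p : ℝ × ℝ | p.1 ^ 2 + p.2 ^ 2 = r ^ 2} ∧ α.Finite ∧
    α.ncard ≤ n - (Set.ncard {((r:ℝ), (0:ℝ))}) ∧
    v = distortion2 (uniformCircle r) (α ∪ {(r, 0)}) } with hE
  -- lower bound
  have hlb : ∀ v ∈ E, V ≤ v := by
    rintro v ⟨α, hαS, hαfin, hαcard, rfl⟩
    set s : Set (ℝ×ℝ) := α ∪ {(r, 0)} with hs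
    have hsfin : s.Finite := hαfin.union (Set.finite_singleton _)
    have hts : (↑hsfin.toFinset : Set (ℝ×ℝ)) = s := hsfin.coe_toFinset
    have htne : hsfin.toFinset.Nonempty :=
      ⟨(r, 0), hsfin.mem_toFinset.2 (Set.mem_union_right _ rfl)⟩
    have hcirc : ∀ p ∈ s, p.1^2 + p.2^2 = r^2 := by
      rintro p (hp | hp)
      · exact hαS hp
      · rw [Set.mem_singleton_iff] at hp
        subst hp
        norm_num
    have hcard : hsfin.toFinset.card ≤ n := by
      rw [← Set.ncard_eq_toFinset_card s hsfin]
      calc s.ncard ≤ α.ncard + (Set.ncard {((r:ℝ), (0:ℝ))}) := Set.ncard_union_le _ _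
        _ ≤ (n - 1) + 1 := by
            rw [Set.ncard_singleton]
            rw [Set.ncard_singleton] at hαcard
            omega
        _ ≤ n := by omega
    exact Stmt8Aux.distortion2_ge r hr n hn s hcirc hsfin.toFinset hts htne hcard
  -- the optimal set gives membership
  have hmem0 : ((r:ℝ), (0:ℝ)) ∈ sn := by
    refine ⟨1, ⟨le_refl 1, hn⟩, ?_⟩
    norm_num
  have hsnfin : sn.Finite := (Set.finite_Icc 1 n).image _
  have hsncard : sn.ncard ≤ n := by
    calc sn.ncard ≤ (Set.Icc 1 n).ncard := Set.ncard_image_le (Set.finite_Icc 1 n)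
      _ = n := by rw [Set.ncard_eq_toFinset_card']; simp
  have hVmem : V ∈ E := by
    refine ⟨sn \ {(r, 0)}, ?_, hsnfin.diff, ?_, ?_⟩
    · rintro p ⟨⟨j, hj, rfl⟩, -⟩
      simp only [Set.mem_setOf_eq]
      nlinarith [Real.sin_sq_add_cos_sq (2 * Real.pi * ((j : ℝ) - 1) / n)]
    · rw [Set.ncard_singleton, Set.ncard_diff_singleton_of_mem hmem0]
      omega
    · rw [Set.diff_union_of_subset (Set.singleton_subset_iff.2 hmem0)]
      exact hval2.symm
  have hEne : E.Nonempty := ⟨V, hVmem⟩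
  apply le_antisymm
  · exact csInf_le ⟨V, hlb⟩ hVmem
  · exact le_csInf hEne hlb
end

section
/- Let r > 0, let P be the uniform distribution on the circle L = {(x₁,x₂) ∈ ℝ² : x₁² + x₂² = r²}, and let V_n denote the n-th conditional constrained quantization error for P with respect to the constraint S = L and the conditional set β = {(r,0)}. Then V_n → 0 as n → ∞, the conditional constrained quantization dimension exists and equals 1, i.e., lim_{n→∞} 2 log n / (−log V_n) = 1, and the conditional constrained quantization coefficient exists as a finite positive number: lim_{n→∞} n²·V_n = π²r²/3. -/
open MeasureTheory Set Filter Real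

noncomputable def cpt (r θ : ℝ) : ℝ × ℝ := (r * Real.cos θ, r * Real.sin θ)

lemma cpt_mem_circle (r θ : ℝ) : (cpt r θ).1 ^ 2 + (cpt r θ).2 ^ 2 = r ^ 2 := by
  simp only [cpt]
  have := Real.sin_sq_add_cos_sq θ
  ring_nf
  nlinarith [Real.sin_sq_add_cos_sq θ]

lemma sqDist_cpt (r θ a : ℝ) : sqDist (cpt r θ) (cpt r a) = 2 * r ^ 2 * (1 - Real.cos (θ - a)) := by
  simp only [sqDist, cpt, Real.cos_sub]
  nlinarith [Real.sin_sq_add_cos_sq θ, Real.sin_sq_add_cos_sq a]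

lemma circle_mem_cpt {r : ℝ} (hr : 0 < r) {p : ℝ × ℝ} (hp : p.1 ^ 2 + p.2 ^ 2 = r ^ 2) :
    ∃ a, p = cpt r a := by
  have h1 : |p.1 / r| ≤ 1 := by
    rw [abs_div, abs_of_pos hr, div_le_one hr]
    nlinarith [sq_nonneg p.2, abs_nonneg p.1, sq_abs p.1]
  rcases le_or_gt 0 p.2 with h | h
  · refine ⟨Real.arccos (p.1 / r), ?_⟩
    have hc := Real.cos_arccos (neg_le_of_abs_le h1) (le_of_abs_le h1)
    have hs := Real.sin_arccos (p.1 / r)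
    have : Real.sqrt (1 - (p.1 / r) ^ 2) = p.2 / r := by
      rw [show 1 - (p.1/r)^2 = (p.2/r)^2 by field_simp; nlinarith]
      exact Real.sqrt_sq (by positivity)
    simp only [cpt, hc, hs, this]
    have : r ≠ 0 := hr.ne'
    ext <;> simp <;> field_simp
  · refine ⟨-Real.arccos (p.1 / r), ?_⟩
    have hc := Real.cos_arccos (neg_le_of_abs_le h1) (le_of_abs_le h1)
    have hs := Real.sin_arccos (p.1 / r)
    have : Real.sqrt (1 - (p.1 / r) ^ 2) = -(p.2 / r) := by
      rw [show 1 - (p.1/r)^2 = (-(p.2/r))^2 by field_simp; nlinarith]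
      exact Real.sqrt_sq (by rw [← neg_div]; exact div_nonneg (by linarith) hr.le)
    simp only [cpt, Real.cos_neg, Real.sin_neg, hc, hs, this]
    have : r ≠ 0 := hr.ne'
    ext <;> simp <;> field_simp



lemma sqDist_nonneg (p q : ℝ × ℝ) : 0 ≤ sqDist p q := by
  unfold sqDist; positivity

lemma sInf_sqDist_nonneg (x : ℝ × ℝ) (T : Set (ℝ × ℝ)) : 0 ≤ sInf (sqDist x '' T) := by
  rcases T.eq_empty_or_nonempty with rfl | hT
  · simp [Real.sInf_empty]
  · exact le_csInf (hT.image _) (by rintro v ⟨p, -, rfl⟩; exact sqDist_nonneg x p)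

lemma sInf_sqDist_le {x p : ℝ × ℝ} {T : Set (ℝ × ℝ)} (hT : T.Finite) (hp : p ∈ T) :
    sInf (sqDist x '' T) ≤ sqDist x p :=
  csInf_le (hT.image _).bddBelow (mem_image_of_mem _ hp)

lemma continuous_sqDist_right (a : ℝ × ℝ) : Continuous fun x => sqDist x a := by
  unfold sqDist; fun_prop

lemma continuous_sInf_sqDist_finset (s : Finset (ℝ × ℝ)) (hne : s.Nonempty) :
    Continuous (fun x => sInf (sqDist x '' (s : Set (ℝ × ℝ)))) := by
  classical
  induction s using Finset.induction_on with
  | empty => exact absurd hne (by simp)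
  | @insert a s has ih =>
    rcases s.eq_empty_or_nonempty with rfl | hsne
    · simpa using continuous_sqDist_right a
    · have key : ∀ x : ℝ × ℝ, sInf (sqDist x '' (insert a s : Finset (ℝ × ℝ))) =
          min (sqDist x a) (sInf (sqDist x '' (s : Set (ℝ × ℝ)))) := by
        intro x
        rw [Finset.coe_insert, image_insert_eq,
          csInf_insert (s.finite_toSet.image _).bddBelow (hsne.to_set.image _)]
      simp only [key]
      exact Continuous.min (continuous_sqDist_right a) (ih hsne)

lemma continuous_sInf_sqDist {T : Set (ℝ × ℝ)} (hT : T.Finite) (hne : T.Nonempty) :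
    Continuous (fun x => sInf (sqDist x '' T)) := by
  have := continuous_sInf_sqDist_finset hT.toFinset (by simpa using hne)
  simpa [hT.coe_toFinset] using this
lemma distortion2_repr (r : ℝ) {T : Set (ℝ × ℝ)} (hT : T.Finite) (hne : T.Nonempty) :
    distortion2 (uniformCircle r) T =
      (2 * π)⁻¹ * ∫ θ in Ico 0 (2 * π), sInf (sqDist (cpt r θ) '' T) := by
  have hcont := continuous_sInf_sqDist hT hne
  have hφ : Continuous (fun θ : ℝ => (r * Real.cos θ, r * Real.sin θ)) := by fun_prop
  unfold distortion2 uniformCircle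
  rw [integral_map hφ.aemeasurable hcont.aestronglyMeasurable]
  rw [integral_smul_measure]
  have : ((ENNReal.ofReal (2 * π))⁻¹).toReal = (2 * π)⁻¹ := by
    rw [ENNReal.toReal_inv, ENNReal.toReal_ofReal (by positivity)]
  rw [this]
  rfl

lemma integrableOn_sInf_sqDist (r : ℝ) {T : Set (ℝ × ℝ)} (hT : T.Finite) (hne : T.Nonempty)
    (a b : ℝ) :
    IntervalIntegrable (fun θ => sInf (sqDist (cpt r θ) '' T)) volume a b := by
  have hcont := continuous_sInf_sqDist hT hne
  exact ((hcont.comp (by unfold cpt; fun_prop)).intervalIntegrable a b)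

lemma indicator_int_eq (A : Set ℝ) (hAm : MeasurableSet A) (I : Set ℝ) :
    ∫ θ in I, A.indicator (1 : ℝ → ℝ) θ = (volume (A ∩ I)).toReal := by
  rw [MeasureTheory.integral_indicator hAm]
  simp only [Pi.one_apply]
  rw [MeasureTheory.setIntegral_const, measureReal_def, Measure.restrict_apply hAm, smul_eq_mul, mul_one]

lemma arc_measure (a s : ℝ) (hs0 : 0 ≤ s) (hsπ : s ≤ π) :
    volume ({θ | Real.cos s ≤ Real.cos (θ - a)} ∩ Ico 0 (2 * π)) ≤ ENNReal.ofReal (2 * s) := by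
  set A : Set ℝ := {θ | Real.cos s ≤ Real.cos (θ - a)} with hA
  have hAm : MeasurableSet A := by
    have : A = (fun θ => Real.cos (θ - a)) ⁻¹' (Ici (Real.cos s)) := rfl
    rw [this]
    exact (by fun_prop : Measurable fun θ => Real.cos (θ - a)) measurableSet_Ici
  set F : ℝ → ℝ := A.indicator 1 with hF
  have hper : Function.Periodic F (2 * π) := by
    intro θ
    have h2 : (θ + 2 * π) ∈ A ↔ θ ∈ A := by
      simp only [hA, mem_setOf_eq, show θ + 2 * π - a = θ - a + 2 * π by ring,
        Real.cos_add_two_pi]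
    simp only [hF, indicator_apply, h2, Pi.one_apply]
  have h_int : ∀ t₁ t₂ : ℝ, IntervalIntegrable F volume t₁ t₂ := by
    intro t₁ t₂
    rw [intervalIntegrable_iff]
    exact (integrableOn_const measure_Ioc_lt_top.ne).indicator hAm
  have key : ∫ x in (0 : ℝ)..(2 * π), F x = ∫ x in (a - π)..(a + π), F x := by
    have := hper.intervalIntegral_add_eq 0 (a - π)
    simpa [show a - π + 2 * π = a + π by ring] using this
  have lhs_eq : (volume (A ∩ Ico 0 (2 * π))).toReal = ∫ x in (0:ℝ)..(2*π), F x := by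
    rw [intervalIntegral.integral_of_le (by positivity), ← MeasureTheory.integral_Icc_eq_integral_Ioc, MeasureTheory.integral_Icc_eq_integral_Ico,
      indicator_int_eq A hAm]
  have rhs_eq : ∫ x in (a - π)..(a + π), F x = (volume (A ∩ Ioc (a - π) (a + π))).toReal := by
    rw [intervalIntegral.integral_of_le (by linarith [Real.pi_pos]), indicator_int_eq A hAm]
  have hsub : A ∩ Ioc (a - π) (a + π) ⊆ Icc (a - s) (a + s) := by
    rintro θ ⟨hθA, hθI⟩
    have h1 : -π < θ - a := by linarith [hθI.1]
    have h2 : θ - a ≤ π := by linarith [hθI.2]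
    have habs : |θ - a| ≤ s := by
      by_contra hcon
      push_neg at hcon
      have h3 : |θ - a| ≤ π := abs_le.mpr ⟨h1.le, h2⟩
      have h4 : Real.cos (|θ - a|) < Real.cos s :=
        Real.cos_lt_cos_of_nonneg_of_le_pi hs0 h3 hcon
      rw [Real.cos_abs] at h4
      exact absurd hθA h4.not_ge
    rw [abs_le] at habs
    constructor <;> linarith [habs.1, habs.2]
  have hfin : volume (A ∩ Ico 0 (2 * π)) ≠ ⊤ :=
    ((measure_mono inter_subset_right).trans_lt measure_Ico_lt_top).ne
  rw [ENNReal.le_ofReal_iff_toReal_le hfin (by positivity)]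
  rw [lhs_eq, key, rhs_eq]
  have hmono : volume (A ∩ Ioc (a - π) (a + π)) ≤ volume (Icc (a - s) (a + s)) :=
    measure_mono hsub
  calc (volume (A ∩ Ioc (a - π) (a + π))).toReal
      ≤ (volume (Icc (a - s) (a + s))).toReal := by
        apply ENNReal.toReal_mono (by simp [Real.volume_Icc]) hmono
    _ = 2 * s := by rw [Real.volume_Icc, ENNReal.toReal_ofReal (by linarith)]; ring


set_option maxHeartbeats 2000000 in
lemma lower_main {r : ℝ} (hr : 0 < r) {T : Set (ℝ × ℝ)} (hT : T.Finite)
    (h0 : (r, 0) ∈ T) (hcirc : ∀ p ∈ T, p.1 ^ 2 + p.2 ^ 2 = r ^ 2) :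
    2 * r ^ 2 * (2 * π - 2 * T.ncard * Real.sin (π / T.ncard)) ≤
      ∫ θ in Ico 0 (2 * π), sInf (sqDist (cpt r θ) '' T) := by
  classical
  have hne : T.Nonempty := ⟨_, h0⟩
  set m : ℕ := T.ncard with hm
  have hm1 : 0 < m := (Set.ncard_pos hT).mpr hne
  have hmpos : (0:ℝ) < m := by exact_mod_cast hm1
  have hm1' : (1:ℝ) ≤ m := by exact_mod_cast hm1
  set u : ℝ := π / m with hu
  have hu0 : 0 < u := div_pos Real.pi_pos hmpos
  have huπ : u ≤ π := by
    rw [hu, div_le_iff₀ hmpos]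
    nlinarith [Real.pi_pos, hm1']
  set g : ℝ → ℝ := fun θ => sInf (sqDist (cpt r θ) '' T) with hg
  have hgc : Continuous g := by
    exact (continuous_sInf_sqDist hT hne).comp (by unfold cpt; fun_prop)
  set μ : Measure ℝ := volume.restrict (Ico 0 (2 * π)) with hμ
  have hμfin : IsFiniteMeasure μ := by
    constructor
    rw [hμ, Measure.restrict_apply_univ]
    exact measure_Ico_lt_top
  have hgint : Integrable g μ := by
    rw [hμ, ← IntegrableOn]
    exact hgc.integrableOn_Icc.mono_set Ico_subset_Icc_self
  have hgnn : 0 ≤ᵐ[μ] g := Eventually.of_forall (fun θ => sInf_sqDist_nonneg _ _)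
  have hr0 : (r, 0) = cpt r 0 := by simp [cpt]
  set M : ℝ := 4 * r ^ 2 with hM
  have hgbdd : g ≤ᵐ[μ] fun _ => M := by
    apply Eventually.of_forall
    intro θ
    have h1 : g θ ≤ sqDist (cpt r θ) (r, 0) := sInf_sqDist_le hT h0
    rw [hr0, sqDist_cpt] at h1
    show g θ ≤ M
    nlinarith [Real.neg_one_le_cos (θ - 0)]
  -- layer cake
  have layer : ∫ θ, g θ ∂μ = ∫ t in Ioc 0 M, ((μ {θ | t ≤ g θ}).toReal) :=
    hgint.integral_eq_integral_Ioc_meas_le hgnn hgbdd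
  -- the tail function is antitone
  set lam : ℝ → ℝ := fun t => (μ {θ | t ≤ g θ}).toReal with hlam
  have hanti : Antitone lam := by
    intro t₁ t₂ h
    apply ENNReal.toReal_mono
    · exact (measure_lt_top μ _).ne
    · exact measure_mono (fun θ hθ => le_trans h hθ)
  have hM0 : (0:ℝ) ≤ M := by positivity
  have hlamint : IntegrableOn lam (Ioc 0 M) := by
    refine IntegrableOn.mono_set ?_ Ioc_subset_Icc_self
    exact (hanti.antitoneOn _).integrableOn_of_measure_ne_top (a := 0) (b := M)
      ⟨left_mem_Icc.mpr hM0, fun x hx => hx.1⟩ ⟨right_mem_Icc.mpr hM0, fun x hx => hx.2⟩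
      (by simp [Real.volume_Icc]) measurableSet_Icc
  -- angles for points of T
  have hang0 : ∀ p ∈ T, ∃ a, p = cpt r a := fun p hp => circle_mem_cpt hr (hcirc p hp)
  choose! ang hang using hang0
  set T' := hT.toFinset with hT'
  have hcard : T'.card = m := by rw [hm, Set.ncard_eq_toFinset_card T hT]
  set c : ℝ → ℝ := fun s => 2 * r ^ 2 * (1 - Real.cos s) with hc
  set T₀ : ℝ := c u with hT₀def
  have hcosu : Real.cos u < 1 := by
    have := Real.cos_lt_cos_of_nonneg_of_le_pi le_rfl huπ hu0
    rwa [Real.cos_zero] at this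
  have hT₀pos : 0 < T₀ := by
    rw [hT₀def, hc]
    have : 0 < 1 - Real.cos u := by linarith
    positivity
  have hT₀M : T₀ ≤ M := by
    rw [hT₀def]
    show 2 * r ^ 2 * (1 - Real.cos u) ≤ M
    nlinarith [Real.neg_one_le_cos u]
  set f : ℝ → ℝ := fun t => 2 * π - 2 * (m:ℝ) * Real.arccos (1 - t / (2 * r ^ 2)) with hf
  have hfc : Continuous f := by
    apply Continuous.sub continuous_const
    exact continuous_const.mul (Real.continuous_arccos.comp (by fun_prop))
  -- pointwise bound f ≤ lam on Ioc 0 T₀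
  have hpt : ∀ t ∈ Ioc 0 T₀, f t ≤ lam t := by
    rintro t ⟨ht0, htT⟩
    set s : ℝ := Real.arccos (1 - t / (2 * r ^ 2)) with hs
    have hr2 : (0:ℝ) < 2 * r ^ 2 := by positivity
    have htM : t ≤ M := htT.trans hT₀M
    have harg1 : -1 ≤ 1 - t / (2 * r ^ 2) := by
      have hd2 : t / (2 * r ^ 2) ≤ 2 := by rw [div_le_iff₀ hr2]; nlinarith
      linarith
    have harg2 : 1 - t / (2 * r ^ 2) ≤ 1 := by
      have : 0 ≤ t / (2 * r ^ 2) := by positivity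
      linarith
    have hcs : Real.cos s = 1 - t / (2 * r ^ 2) := Real.cos_arccos harg1 harg2
    have hs0 : 0 < s := Real.arccos_pos.mpr (by
      have : 0 < t / (2 * r ^ 2) := by positivity
      linarith)
    have hsπ : s ≤ π := Real.arccos_le_pi _
    have hcosu_le : Real.cos u ≤ Real.cos s := by
      rw [hcs]
      have : t / (2 * r ^ 2) ≤ 1 - Real.cos u := by
        rw [div_le_iff₀ hr2]
        calc t ≤ T₀ := htT
          _ = (1 - Real.cos u) * (2 * r ^ 2) := by rw [hT₀def, hc]; ring
      linarith
    have hsu : s ≤ u := by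
      by_contra hcon
      push_neg at hcon
      have := Real.cos_lt_cos_of_nonneg_of_le_pi hu0.le hsπ hcon
      linarith
    have hmeas_g : MeasurableSet {θ | g θ < t} :=
      measurableSet_lt hgc.measurable measurable_const
    have hincl : {θ | g θ < t} ∩ Ico 0 (2 * π) ⊆
        ⋃ p ∈ T', ({θ | Real.cos s ≤ Real.cos (θ - ang p)} ∩ Ico 0 (2 * π)) := by
      rintro θ ⟨hθ, hθI⟩
      have hmem : sInf (sqDist (cpt r θ) '' T) ∈ sqDist (cpt r θ) '' T :=
        (hne.image _).csInf_mem (hT.image _)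
      obtain ⟨p, hpT, hpe⟩ := hmem
      refine mem_biUnion (hT.mem_toFinset.mpr hpT) ⟨?_, hθI⟩
      have hpa : p = cpt r (ang p) := hang p hpT
      rw [hpa, sqDist_cpt] at hpe
      have hlt : 2 * r ^ 2 * (1 - Real.cos (θ - ang p)) < t := by rw [hpe]; exact hθ
      simp only [mem_setOf_eq]
      have ht_eq : t = 2 * r ^ 2 * (1 - Real.cos s) := by
        have h' := hcs
        field_simp at h'
        nlinarith [h']
      nlinarith [hr2]
    have hub : μ {θ | g θ < t} ≤ ENNReal.ofReal (2 * m * s) := by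
      rw [hμ, Measure.restrict_apply hmeas_g]
      refine le_trans (measure_mono hincl) ?_
      refine le_trans (measure_biUnion_finset_le T' _) ?_
      refine le_trans (Finset.sum_le_sum
        (fun p _ => arc_measure (ang p) s hs0.le hsπ)) ?_
      rw [Finset.sum_const, hcard, nsmul_eq_mul, ← ENNReal.ofReal_natCast,
        ← ENNReal.ofReal_mul (show (0:ℝ) ≤ (m:ℝ) from Nat.cast_nonneg m)]
      apply ENNReal.ofReal_le_ofReal
      ring_nf
      nlinarith [hs0]
    have hmeas_ge : MeasurableSet {θ | t ≤ g θ} :=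
      measurableSet_le measurable_const hgc.measurable
    have hsplit : volume (Ico (0:ℝ) (2 * π)) ≤ μ {θ | t ≤ g θ} + μ {θ | g θ < t} := by
      rw [hμ, Measure.restrict_apply hmeas_ge, Measure.restrict_apply hmeas_g]
      refine le_trans (measure_mono ?_) (measure_union_le _ _)
      intro θ hθ
      by_cases h : t ≤ g θ
      · exact Or.inl ⟨h, hθ⟩
      · exact Or.inr ⟨lt_of_not_ge h, hθ⟩
    have h2π : (volume (Ico (0:ℝ) (2 * π))).toReal = 2 * π := by
      rw [Real.volume_Ico, sub_zero, ENNReal.toReal_ofReal (by positivity)]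
    have hfin1 : μ {θ | t ≤ g θ} ≠ ⊤ := (measure_lt_top μ _).ne
    have hfin2 : μ {θ | g θ < t} ≠ ⊤ := (measure_lt_top μ _).ne
    have hts : 2 * π ≤ lam t + (μ {θ | g θ < t}).toReal := by
      rw [← h2π, hlam]
      rw [← ENNReal.toReal_add hfin1 hfin2]
      apply ENNReal.toReal_mono (by simp [hfin1, hfin2, ENNReal.add_ne_top]) hsplit
    have hub' : (μ {θ | g θ < t}).toReal ≤ 2 * m * s := by
      rw [← ENNReal.toReal_ofReal (show (0:ℝ) ≤ 2 * m * s by positivity)]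
      exact ENNReal.toReal_mono ENNReal.ofReal_ne_top hub
    rw [hf]
    simp only [← hs]
    linarith
  -- integral comparison chain
  have hfint : IntegrableOn f (Ioc 0 T₀) :=
    (hfc.integrableOn_Icc).mono_set Ioc_subset_Icc_self
  have step1 : ∫ t in Ioc 0 T₀, f t ≤ ∫ t in Ioc 0 T₀, lam t :=
    setIntegral_mono_on hfint (hlamint.mono_set (Ioc_subset_Ioc le_rfl hT₀M))
      measurableSet_Ioc hpt
  have step2 : ∫ t in Ioc 0 T₀, lam t ≤ ∫ t in Ioc 0 M, lam t := by
    apply setIntegral_mono_set hlamint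
    · exact Eventually.of_forall (fun t => ENNReal.toReal_nonneg)
    · exact HasSubset.Subset.eventuallyLE (Ioc_subset_Ioc le_rfl hT₀M)
  -- substitution
  have hmu : (m:ℝ) * u = π := by
    rw [hu]
    field_simp
  have hderiv : ∀ x ∈ uIcc (0:ℝ) u, HasDerivAt c (2 * r ^ 2 * Real.sin x) x := by
    intro x _
    have h1 : HasDerivAt Real.cos (-Real.sin x) x := Real.hasDerivAt_cos x
    have h2 : HasDerivAt (fun s => 2 * r ^ 2 * (1 - Real.cos s))
        (2 * r ^ 2 * (0 - -Real.sin x)) x :=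
      ((hasDerivAt_const x (1:ℝ)).sub h1).const_mul _
    convert h2 using 1
    ring
  have hsubst : ∫ t in (0:ℝ)..T₀, f t = ∫ x in (0:ℝ)..u, (2 * r ^ 2 * Real.sin x) * f (c x) := by
    have := intervalIntegral.integral_comp_smul_deriv hderiv
      (by fun_prop : Continuous fun x => 2 * r ^ 2 * Real.sin x).continuousOn hfc
    have hc0 : c 0 = 0 := by rw [hc]; simp
    have hce : ∫ t in (c 0)..(c u), f t = ∫ t in (0:ℝ)..T₀, f t := by
      rw [hc0, ← hT₀def]
    rw [← hce, ← this]
    simp [smul_eq_mul]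
  have hcongr : ∫ x in (0:ℝ)..u, (2 * r ^ 2 * Real.sin x) * f (c x)
      = ∫ x in (0:ℝ)..u, (2 * r ^ 2 * Real.sin x) * (2 * π - 2 * m * x) := by
    apply intervalIntegral.integral_congr
    intro x hx
    rw [uIcc_of_le hu0.le] at hx
    have harg : 1 - c x / (2 * r ^ 2) = Real.cos x := by
      rw [hc]
      field_simp
      ring
    rw [hf]
    simp only
    rw [harg, Real.arccos_cos hx.1 (hx.2.trans huπ)]
  have hH : ∀ x : ℝ, HasDerivAt
      (fun x => 2 * r ^ 2 * (-(2 * π) * Real.cos x - 2 * m * (Real.sin x - x * Real.cos x)))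
      ((2 * r ^ 2 * Real.sin x) * (2 * π - 2 * m * x)) x := by
    intro x
    have hcos : HasDerivAt Real.cos (-Real.sin x) x := Real.hasDerivAt_cos x
    have hsin : HasDerivAt Real.sin (Real.cos x) x := Real.hasDerivAt_sin x
    have hid : HasDerivAt (fun x : ℝ => x) 1 x := hasDerivAt_id x
    have hxc : HasDerivAt (fun x : ℝ => x * Real.cos x)
        (1 * Real.cos x + x * -Real.sin x) x := hid.mul hcos
    have h := (((hcos.const_mul (-(2 * π))).sub
      ((hsin.sub hxc).const_mul (2 * (m:ℝ)))).const_mul (2 * r ^ 2))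
    convert h using 1
    · rfl
    · rfl
    · rfl
    · ring
  have hFTC : ∫ x in (0:ℝ)..u, (2 * r ^ 2 * Real.sin x) * (2 * π - 2 * m * x)
      = 2 * r ^ 2 * (2 * π - 2 * m * Real.sin u) := by
    rw [intervalIntegral.integral_eq_sub_of_hasDerivAt (fun x _ => hH x)
      (Continuous.intervalIntegrable (by fun_prop) 0 u)]
    simp only [Real.cos_zero, Real.sin_zero]
    have h' : (m:ℝ) * u = π := hmu
    linear_combination (4 * r ^ 2 * Real.cos u) * h'
  have hIoc_eq : ∫ t in Ioc 0 T₀, f t = ∫ t in (0:ℝ)..T₀, f t :=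
    (intervalIntegral.integral_of_le hT₀pos.le).symm
  have final1 : 2 * r ^ 2 * (2 * π - 2 * m * Real.sin u) ≤ ∫ θ, g θ ∂μ := by
    rw [layer]
    calc 2 * r ^ 2 * (2 * π - 2 * m * Real.sin u)
        = ∫ t in Ioc 0 T₀, f t := by rw [hIoc_eq, hsubst, hcongr, hFTC]
      _ ≤ ∫ t in Ioc 0 T₀, lam t := step1
      _ ≤ ∫ t in Ioc 0 M, lam t := step2
  exact final1


lemma cpt_two_pi (r : ℝ) : cpt r (2 * π) = (r, 0) := by
  simp [cpt, Real.cos_two_pi, Real.sin_two_pi]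

lemma two_one_sub_cos_le_sq (x : ℝ) : 2 * (1 - Real.cos x) ≤ x ^ 2 := by
  have := Real.one_sub_sq_div_two_le_cos (x := x)
  linarith

set_option maxHeartbeats 1000000 in
lemma upper_main {r : ℝ} (hr : 0 < r) {n : ℕ} (hn : 1 ≤ n) :
    ∃ α : Set (ℝ × ℝ), α ⊆ {p : ℝ × ℝ | p.1 ^ 2 + p.2 ^ 2 = r ^ 2} ∧ α.Finite ∧
      α.ncard ≤ n - 1 ∧
      ∫ θ in Ico 0 (2 * π), sInf (sqDist (cpt r θ) '' (α ∪ {(r, 0)})) ≤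
        2 * (r ^ 2 * (π / n) ^ 3 / 3) * ((n : ℝ) + 3) := by
  classical
  have hnR : (0:ℝ) < n := by exact_mod_cast hn
  set F : Finset (ℝ × ℝ) :=
    (Finset.range (n - 1)).image (fun k : ℕ => cpt r ((2 * (k:ℝ) + 1) * π / n)) with hF
  refine ⟨↑F, ?_, F.finite_toSet, ?_, ?_⟩
  · intro p hp
    simp only [hF, Finset.coe_image, mem_image] at hp
    obtain ⟨k, -, rfl⟩ := hp
    exact cpt_mem_circle r _
  · rw [Set.ncard_coe_finset]
    exact (Finset.card_image_le.trans (by simp))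
  · set T : Set (ℝ × ℝ) := ↑F ∪ {(r, 0)} with hT
    have hTfin : T.Finite := (F.finite_toSet).union (finite_singleton _)
    have hTne : T.Nonempty := ⟨(r, 0), by simp [hT]⟩
    set g : ℝ → ℝ := fun θ => sInf (sqDist (cpt r θ) '' T) with hg
    have hgc : Continuous g :=
      (continuous_sInf_sqDist hTfin hTne).comp (by unfold cpt; fun_prop)
    set a : ℕ → ℝ := fun k => 2 * π * k / n with ha
    have ha0 : a 0 = 0 := by simp [ha]
    have han : a n = 2 * π := by simp only [ha]; field_simp
    set C : ℝ := r ^ 2 * (π / n) ^ 3 / 3 with hC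
    have hC0 : 0 ≤ C := by positivity
    -- sites
    set sk : ℕ → ℝ := fun k => if k = n - 1 then 2 * π else (2 * (k:ℝ) + 1) * π / n with hsk
    have hsite : ∀ k < n, cpt r (sk k) ∈ T := by
      intro k hk
      by_cases hke : k = n - 1
      · simp only [hsk, hke, if_pos rfl, cpt_two_pi]
        exact Or.inr rfl
      · left
        simp only [hsk, if_neg hke, hF, Finset.coe_image, mem_image]
        exact ⟨k, by simpa using (Nat.lt_of_le_of_ne (Nat.le_sub_one_of_lt hk)) hke, rfl⟩
    -- pointwise bound on each interval
    have hpt : ∀ k, ∀ θ, k < n → g θ ≤ r ^ 2 * (θ - sk k) ^ 2 := by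
      intro k θ hk
      have h1 : g θ ≤ sqDist (cpt r θ) (cpt r (sk k)) := sInf_sqDist_le hTfin (hsite k hk)
      rw [sqDist_cpt] at h1
      have h2 := two_one_sub_cos_le_sq (θ - sk k)
      nlinarith [sq_nonneg r]
    -- integral over each subinterval
    have hmono : ∀ k, a k ≤ a (k + 1) := by
      intro k
      simp only [ha]
      push_cast
      gcongr
      linarith
    have hgint : ∀ k, IntervalIntegrable g volume (a k) (a (k + 1)) :=
      fun k => hgc.intervalIntegrable _ _
    have hpiece : ∀ k < n, ∫ θ in (a k)..(a (k + 1)), g θ ≤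
        (if k = n - 1 then 8 * C else 2 * C) := by
      intro k hk
      have hb : ∫ θ in (a k)..(a (k + 1)), r ^ 2 * (θ - sk k) ^ 2 =
          r ^ 2 * ((a (k+1) - sk k) ^ 3 - (a k - sk k) ^ 3) / 3 := by
        have hH : ∀ θ : ℝ, HasDerivAt (fun θ => r ^ 2 * (θ - sk k) ^ 3 / 3)
            (r ^ 2 * (θ - sk k) ^ 2) θ := by
          intro θ
          have h1 : HasDerivAt (fun θ : ℝ => θ - sk k) 1 θ :=
            (hasDerivAt_id θ).sub_const _
          have h2 : HasDerivAt (fun θ : ℝ => (θ - sk k) ^ 3) (3 * (θ - sk k) ^ 2 * 1) θ :=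
            (h1.pow 3).congr_deriv (by push_cast; ring)
          have h3 := (h2.const_mul (r ^ 2 / 3))
          convert h3 using 1
          · rfl
          · rfl
          · funext x; ring
          · ring
        rw [intervalIntegral.integral_eq_sub_of_hasDerivAt (fun θ _ => hH θ)
          (Continuous.intervalIntegrable (by fun_prop) _ _)]
        ring
      have hcmp : ∫ θ in (a k)..(a (k + 1)), g θ ≤
          ∫ θ in (a k)..(a (k + 1)), r ^ 2 * (θ - sk k) ^ 2 := by
        apply intervalIntegral.integral_mono_on (hmono k) (hgint k)
          (Continuous.intervalIntegrable (by fun_prop) _ _)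
        intro θ _
        exact hpt k θ hk
      refine hcmp.trans ?_
      rw [hb]
      by_cases hke : k = n - 1
      · rw [if_pos hke]
        subst hke
        have h1 : a ((n - 1) + 1) = 2 * π := by
          rw [Nat.sub_add_cancel hn, han]
        have h2 : sk (n - 1) = 2 * π := by simp only [hsk]; simp
        have hn0 : (n:ℝ) ≠ 0 := hnR.ne'
        have h3 : a (n - 1) - 2 * π = -(2 * π / n) := by
          simp only [ha]
          rw [Nat.cast_sub hn]
          field_simp
          ring
        rw [h1, h2, h3, hC]
        ring_nf
        nlinarith [Real.pi_pos, sq_nonneg r]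
      · rw [if_neg hke]
        have h2 : sk k = (2 * (k:ℝ) + 1) * π / n := by simp only [hsk, if_neg hke]
        have e1 : a (k+1) - sk k = π / n := by
          rw [ha, h2]; push_cast; field_simp; ring
        have e2 : a k - sk k = -(π / n) := by
          rw [ha, h2]; push_cast; field_simp; ring
        rw [e1, e2, hC]
        ring_nf
        nlinarith [Real.pi_pos, sq_nonneg r]
    -- assemble
    have hIco : ∫ θ in Ico 0 (2 * π), g θ = ∫ θ in (0:ℝ)..(2 * π), g θ := by
      rw [intervalIntegral.integral_of_le (by positivity),
        ← MeasureTheory.integral_Icc_eq_integral_Ioc,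
        MeasureTheory.integral_Icc_eq_integral_Ico]
    have hsum : ∫ θ in (0:ℝ)..(2 * π), g θ = ∑ k ∈ Finset.range n,
        ∫ θ in (a k)..(a (k + 1)), g θ := by
      rw [intervalIntegral.sum_integral_adjacent_intervals (fun k _ => hgint k)]
      rw [ha0, han]
    rw [hIco, hsum]
    calc ∑ k ∈ Finset.range n, ∫ θ in (a k)..(a (k + 1)), g θ
        ≤ ∑ k ∈ Finset.range n, (if k = n - 1 then 8 * C else 2 * C) :=
          Finset.sum_le_sum (fun k hk => hpiece k (Finset.mem_range.mp hk))
      _ = 2 * C * ((n:ℝ) + 3) := by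
          have : ∀ k, (if k = n - 1 then 8 * C else 2 * C) =
              2 * C + (if k = n - 1 then 6 * C else 0) := by
            intro k; by_cases h : k = n - 1 <;> simp [h] <;> ring
          simp only [this]
          rw [Finset.sum_add_distrib, Finset.sum_const, Finset.sum_ite_eq'
            (Finset.range n) (n - 1) (fun _ => 6 * C)]
          simp only [Finset.mem_range, Finset.card_range]
          rw [if_pos (Nat.sub_lt (Nat.lt_of_lt_of_le Nat.zero_lt_one hn) Nat.zero_lt_one)]
          push_cast
          ring


lemma sinc_antitone {x y : ℝ} (hx : 0 < x) (hxy : x ≤ y) (hy : y ≤ π) :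
    x * Real.sin y ≤ y * Real.sin x := by
  have h0y : 0 < y := lt_of_lt_of_le hx hxy
  have hconc := strictConcaveOn_sin_Icc.concaveOn
  have hmem1 : y ∈ Icc (0:ℝ) π := ⟨h0y.le, hy⟩
  have hmem2 : (0:ℝ) ∈ Icc (0:ℝ) π := ⟨le_rfl, Real.pi_pos.le⟩
  have ha : 0 ≤ x / y := by positivity
  have hb : 0 ≤ 1 - x / y := by
    have : x / y ≤ 1 := div_le_one_of_le₀ hxy h0y.le
    linarith
  have hab : x / y + (1 - x / y) = 1 := by ring
  have := hconc.2 hmem1 hmem2 ha hb hab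
  simp only [smul_eq_mul, mul_zero, add_zero, Real.sin_zero] at this
  have hxe : x / y * y = x := by field_simp
  rw [hxe] at this
  calc x * Real.sin y = (x / y * Real.sin y) * y := by field_simp
    _ ≤ Real.sin x * y := by
        apply mul_le_mul_of_nonneg_right _ h0y.le
        linarith
    _ = y * Real.sin x := by ring

lemma sandwich {r : ℝ} (hr : 0 < r) {n : ℕ} (hn : 1 ≤ n) :
    (2 * π)⁻¹ * (2 * r ^ 2 * (2 * π - 2 * n * Real.sin (π / n))) ≤
      condConstrQuantError2 (uniformCircle r) {p : ℝ × ℝ | p.1 ^ 2 + p.2 ^ 2 = r ^ 2}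
        {(r, 0)} n ∧
    condConstrQuantError2 (uniformCircle r) {p : ℝ × ℝ | p.1 ^ 2 + p.2 ^ 2 = r ^ 2}
        {(r, 0)} n ≤ (2 * π)⁻¹ * (2 * (r ^ 2 * (π / n) ^ 3 / 3) * ((n : ℝ) + 3)) := by
  have hnR : (0:ℝ) < n := by exact_mod_cast hn
  have h2π : (0:ℝ) < 2 * π := by positivity
  have hr0circ : ((r, 0) : ℝ × ℝ) ∈ {p : ℝ × ℝ | p.1 ^ 2 + p.2 ^ 2 = r ^ 2} := by
    simp [mem_setOf_eq]
  set S := {p : ℝ × ℝ | p.1 ^ 2 + p.2 ^ 2 = r ^ 2} with hS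
  set V := { v : ℝ | ∃ α : Set (ℝ × ℝ),
    α ⊆ S ∧ α.Finite ∧ α.ncard ≤ n - ({((r:ℝ), (0:ℝ))} : Set (ℝ × ℝ)).ncard ∧
    v = distortion2 (uniformCircle r) (α ∪ {(r, 0)}) } with hVs
  have hbdd : BddBelow V := by
    refine ⟨0, ?_⟩
    rintro v ⟨α, -, -, -, rfl⟩
    exact integral_nonneg (fun x => sInf_sqDist_nonneg _ _)
  have hVne : V.Nonempty := by
    refine ⟨distortion2 (uniformCircle r) (∅ ∪ {(r, 0)}), ∅, empty_subset _,
      finite_empty, by simp, rfl⟩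
  constructor
  · apply le_csInf hVne
    rintro v ⟨α, hαS, hαf, hαc, rfl⟩
    set T : Set (ℝ × ℝ) := α ∪ {(r, 0)} with hT
    have hTfin : T.Finite := hαf.union (finite_singleton _)
    have h0T : ((r, 0) : ℝ × ℝ) ∈ T := Or.inr rfl
    have hcirc : ∀ p ∈ T, p.1 ^ 2 + p.2 ^ 2 = r ^ 2 := by
      rintro p (hp | hp)
      · exact hαS hp
      · rw [mem_singleton_iff] at hp
        subst hp
        simpa using hr0circ
    have hlow := lower_main hr hTfin h0T hcirc
    set m : ℕ := T.ncard with hm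
    have hm1 : 1 ≤ m := (Set.ncard_pos hTfin).mpr ⟨_, h0T⟩
    have hmn : m ≤ n := by
      rw [hm, hT]
      refine (Set.ncard_union_le _ _).trans ?_
      rw [Set.ncard_singleton]
      rw [Set.ncard_singleton] at hαc
      omega
    have hmR : (0:ℝ) < m := by exact_mod_cast hm1
    have hmnR : (m:ℝ) ≤ n := by exact_mod_cast hmn
    have hsin : (m:ℝ) * Real.sin (π / m) ≤ (n:ℝ) * Real.sin (π / n) := by
      have hx : 0 < π / n := by positivity
      have hxy : π / n ≤ π / m := by
        apply div_le_div_of_nonneg_left Real.pi_pos.le hmR hmnR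
      have hy : π / m ≤ π := by
        rw [div_le_iff₀ hmR]
        nlinarith [Real.pi_pos, hmR, hm1, (by exact_mod_cast hm1 : (1:ℝ) ≤ m)]
      have key := sinc_antitone hx hxy hy
      -- (π/n) * sin (π/m) ≤ (π/m) * sin (π/n)
      rw [div_mul_eq_mul_div, div_mul_eq_mul_div, div_le_div_iff₀ hnR hmR] at key
      nlinarith [Real.pi_pos]
    have hLbLb : 2 * r ^ 2 * (2 * π - 2 * n * Real.sin (π / n)) ≤
        2 * r ^ 2 * (2 * π - 2 * m * Real.sin (π / m)) := by
      nlinarith [sq_nonneg r]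
    have hrepr := distortion2_repr r hTfin ⟨_, h0T⟩
    rw [hrepr]
    apply mul_le_mul_of_nonneg_left _ (by positivity : (0:ℝ) ≤ (2*π)⁻¹)
    exact hLbLb.trans hlow
  · obtain ⟨α, hαS, hαf, hαc, hint⟩ := upper_main hr hn
    have hmem : distortion2 (uniformCircle r) (α ∪ {(r, 0)}) ∈ V := by
      refine ⟨α, hαS, hαf, ?_, rfl⟩
      rw [Set.ncard_singleton]
      exact hαc
    refine (csInf_le hbdd hmem).trans ?_
    have hTfin : (α ∪ {((r:ℝ), (0:ℝ))} : Set (ℝ × ℝ)).Finite := hαf.union (finite_singleton _)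
    rw [distortion2_repr r hTfin ⟨_, Or.inr rfl⟩]
    exact mul_le_mul_of_nonneg_left hint (by positivity : (0:ℝ) ≤ (2*π)⁻¹)


lemma key_sin (x : ℝ) (hx : 0 < x) (hx1 : x ≤ 1) :
    |(x - Real.sin x) / x ^ 3 - 1 / 6| ≤ x * (5 / 96) := by
  have hb := Real.sin_bound (x := x) (by rw [abs_of_pos hx]; exact hx1)
  have h3 : (0:ℝ) < x ^ 3 := by positivity
  have e : (x - Real.sin x) / x ^ 3 - 1 / 6 = ((x - Real.sin x) - x ^ 3 / 6) / x ^ 3 := by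
    have h3' : (x:ℝ) ^ 3 ≠ 0 := by positivity
    field_simp
  rw [e, abs_div, abs_of_pos h3, div_le_iff₀ h3]
  have e2 : |x - Real.sin x - x ^ 3 / 6| = |Real.sin x - (x - x ^ 3 / 6)| := by
    rw [abs_sub_comm]; ring_nf
  rw [e2]
  refine hb.trans ?_
  rw [abs_of_pos hx]
  have h4 := pow_pos hx 4
  nlinarith [mul_le_mul_of_nonneg_left hx1 h4.le]

/-- Theorem 3.5: for the uniform distribution on the circle of radius `r`, with constraint the
circle itself and conditional set `{(r, 0)}`, the conditional constrained quantization errors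
`V_n` tend to `0`, the conditional constrained quantization dimension equals `1`, and the
conditional constrained quantization coefficient equals `π²r²/3`. -/
theorem stmt9 (r : ℝ) (hr : 0 < r) (V : ℕ → ℝ)
    (hV : ∀ n : ℕ, V n = condConstrQuantError2 (uniformCircle r)
        {p : ℝ × ℝ | p.1 ^ 2 + p.2 ^ 2 = r ^ 2} {(r, 0)} n) :
    Tendsto V atTop (nhds 0)
    ∧ Tendsto (fun n : ℕ => 2 * Real.log n / (-Real.log (V n))) atTop (nhds 1)
    ∧ Tendsto (fun n : ℕ => (n : ℝ) ^ 2 * V n) atTop (nhds (Real.pi ^ 2 * r ^ 2 / 3)) := by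
  have hπ := Real.pi_pos
  set c : ℝ := π ^ 2 * r ^ 2 / 3 with hc
  have hcpos : 0 < c := by positivity
  set Lb : ℕ → ℝ := fun n => (2 * π)⁻¹ * (2 * r ^ 2 * (2 * π - 2 * n * Real.sin (π / n)))
    with hLbdef
  set Ub : ℕ → ℝ := fun n => (2 * π)⁻¹ * (2 * (r ^ 2 * (π / n) ^ 3 / 3) * ((n : ℝ) + 3))
    with hUbdef
  have hsand : ∀ n : ℕ, 1 ≤ n → Lb n ≤ V n ∧ V n ≤ Ub n := by
    intro n hn
    rw [hV n]
    exact sandwich hr hn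
  have hLb0 : ∀ n : ℕ, 1 ≤ n → 0 ≤ Lb n := by
    intro n hn
    have hnR : (0:ℝ) < n := by exact_mod_cast hn
    have hs := Real.sin_le (le_of_lt (by positivity : (0:ℝ) < π / n))
    have h1 : (n:ℝ) * Real.sin (π / n) ≤ π := by
      calc (n:ℝ) * Real.sin (π / n) ≤ (n:ℝ) * (π / n) :=
            mul_le_mul_of_nonneg_left hs hnR.le
        _ = π := by field_simp
    simp only [hLbdef]
    apply mul_nonneg (by positivity)
    nlinarith [sq_nonneg r]
  have hUblim : Tendsto (fun n : ℕ => (n:ℝ) ^ 2 * Ub n) atTop (nhds c) := by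
    have heq : ∀ᶠ n : ℕ in atTop, c * (1 + 3 * (n:ℝ)⁻¹) = (n:ℝ) ^ 2 * Ub n := by
      filter_upwards [eventually_ge_atTop 1] with n hn
      have hnR : (0:ℝ) < n := by exact_mod_cast hn
      simp only [hUbdef, hc]
      field_simp
    have h2 : Tendsto (fun n : ℕ => c * (1 + 3 * (n:ℝ)⁻¹)) atTop (nhds (c * (1 + 3 * 0))) :=
      tendsto_const_nhds.mul (tendsto_const_nhds.add
        (tendsto_const_nhds.mul tendsto_inv_atTop_nhds_zero_nat))
    rw [show c * (1 + 3 * 0) = c by ring] at h2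
    exact h2.congr' heq
  have hLblim : Tendsto (fun n : ℕ => (n:ℝ) ^ 2 * Lb n) atTop (nhds c) := by
    set K : ℝ := 2 * r ^ 2 * π ^ 2 * (5 / 96) * π with hK
    have hlow : ∀ᶠ n : ℕ in atTop, c - K * (n:ℝ)⁻¹ ≤ (n:ℝ) ^ 2 * Lb n ∧
        (n:ℝ) ^ 2 * Lb n ≤ c + K * (n:ℝ)⁻¹ := by
      filter_upwards [eventually_ge_atTop 4] with n hn
      have hnR : (4:ℝ) ≤ n := by exact_mod_cast hn
      have hn0 : (0:ℝ) < n := by linarith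
      set x : ℝ := π / n with hx
      have hxpos : 0 < x := by positivity
      have hx1 : x ≤ 1 := by
        rw [hx, div_le_one hn0]
        linarith [Real.pi_le_four]
      have hid : (n:ℝ) ^ 2 * Lb n = 2 * r ^ 2 * π ^ 2 * ((x - Real.sin x) / x ^ 3) := by
        simp only [hLbdef, hx]
        field_simp
      have hkey := key_sin x hxpos hx1
      rw [abs_le] at hkey
      have hxv : K * (n:ℝ)⁻¹ = 2 * r ^ 2 * π ^ 2 * (x * (5 / 96)) := by
        rw [hK, hx]; field_simp
      constructor
      · rw [hid, hc, hxv]; nlinarith [sq_nonneg r, hkey.1]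
      · rw [hid, hc, hxv]; nlinarith [sq_nonneg r, hkey.2]
    have hKlim1 : Tendsto (fun n : ℕ => c - K * (n:ℝ)⁻¹) atTop (nhds (c - K * 0)) :=
      tendsto_const_nhds.sub (tendsto_const_nhds.mul tendsto_inv_atTop_nhds_zero_nat)
    have hKlim2 : Tendsto (fun n : ℕ => c + K * (n:ℝ)⁻¹) atTop (nhds (c + K * 0)) :=
      tendsto_const_nhds.add (tendsto_const_nhds.mul tendsto_inv_atTop_nhds_zero_nat)
    rw [show c - K * 0 = c by ring] at hKlim1
    rw [show c + K * 0 = c by ring] at hKlim2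
    exact tendsto_of_tendsto_of_tendsto_of_le_of_le' hKlim1 hKlim2
      (by filter_upwards [hlow] with n h using h.1)
      (by filter_upwards [hlow] with n h using h.2)
  have T3 : Tendsto (fun n : ℕ => (n:ℝ) ^ 2 * V n) atTop (nhds c) := by
    apply tendsto_of_tendsto_of_tendsto_of_le_of_le' hLblim hUblim
    · filter_upwards [eventually_ge_atTop 1] with n hn
      exact mul_le_mul_of_nonneg_left (hsand n hn).1 (by positivity)
    · filter_upwards [eventually_ge_atTop 1] with n hn
      exact mul_le_mul_of_nonneg_left (hsand n hn).2 (by positivity)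
  have T1 : Tendsto V atTop (nhds 0) := by
    have hsq : Tendsto (fun n : ℕ => ((n:ℝ)⁻¹) ^ 2 * ((n:ℝ) ^ 2 * V n)) atTop
        (nhds (0 ^ 2 * c)) :=
      ((tendsto_inv_atTop_nhds_zero_nat).pow 2).mul T3
    rw [show (0:ℝ) ^ 2 * c = 0 by ring] at hsq
    apply hsq.congr'
    filter_upwards [eventually_ge_atTop 1] with n hn
    have hn0 : ((n:ℝ)) ≠ 0 := by
      have : (0:ℝ) < n := by exact_mod_cast hn
      exact this.ne'
    field_simp
  have hVposev : ∀ᶠ n : ℕ in atTop, 0 < V n := by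
    have hev : ∀ᶠ n : ℕ in atTop, c / 2 < (n:ℝ) ^ 2 * V n :=
      T3.eventually (eventually_gt_nhds (by linarith))
    filter_upwards [hev, eventually_ge_atTop 1] with n h1 h2
    have hn0 : (0:ℝ) < (n:ℝ) ^ 2 := by
      have : (0:ℝ) < n := by exact_mod_cast h2
      positivity
    nlinarith
  have T2 : Tendsto (fun n : ℕ => 2 * Real.log n / (-Real.log (V n))) atTop (nhds 1) := by
    set w : ℕ → ℝ := fun n => Real.log ((n:ℝ) ^ 2 * V n) with hw
    have hwlim : Tendsto w atTop (nhds (Real.log c)) := T3.log hcpos.ne'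
    set Ln : ℕ → ℝ := fun n => Real.log n with hLn
    have hLlim : Tendsto Ln atTop atTop :=
      Real.tendsto_log_atTop.comp tendsto_natCast_atTop_atTop
    have h2L : Tendsto (fun n => 2 * Ln n) atTop atTop :=
      hLlim.const_mul_atTop two_pos
    have hinv : Tendsto (fun n => (2 * Ln n)⁻¹) atTop (nhds 0) :=
      h2L.inv_tendsto_atTop
    have hmain : Tendsto (fun n => (1 - w n * (2 * Ln n)⁻¹)⁻¹) atTop
        (nhds (1 - Real.log c * 0)⁻¹) :=
      (tendsto_const_nhds.sub (hwlim.mul hinv)).inv₀ (by norm_num)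
    rw [show ((1:ℝ) - Real.log c * 0)⁻¹ = 1 by norm_num] at hmain
    apply hmain.congr'
    filter_upwards [hVposev, eventually_ge_atTop 2] with n hVp hn2
    have hn1 : (1:ℝ) < n := by exact_mod_cast hn2
    have hn0 : ((n:ℝ)) ≠ 0 := by linarith
    have hLpos : 0 < Ln n := Real.log_pos hn1
    have hwe : w n = 2 * Ln n + Real.log (V n) := by
      rw [hw]
      simp only
      rw [Real.log_mul (pow_ne_zero 2 hn0) hVp.ne', Real.log_pow]
      push_cast
      rw [hLn]
    have hne : -Real.log (V n) = 2 * Ln n - w n := by rw [hwe]; ring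
    have hfrac : (1 - w n * (2 * Ln n)⁻¹)⁻¹ = 2 * Ln n / (2 * Ln n - w n) := by
      have h2Lne : (2 * Ln n) ≠ 0 := by positivity
      have e1 : 1 - w n * (2 * Ln n)⁻¹ = (2 * Ln n - w n) / (2 * Ln n) := by
        field_simp
      rw [e1, inv_div]
    rw [hfrac, hne, hLn]
  exact ⟨T1, T2, T3⟩
end
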